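/- Let K be an integral domain (not necessarily Noetherian) and let K⟨X⟩ be a free K-algebra on a nonempty set X. Then no proper nonzero two-sided ideal I of K⟨X⟩ is free as a K-algebra, i.e. no such I is isomorphic as a K-algebra to a free K-algebra K⟨Y⟩ on any set Y. -/

import Mathlib

/-- The free non-unital associative `K`-algebra on `X`: the semigroup algebra of the free
semigroup `X⁺` over `K`. -/
abbrev FreeNUAlg (K X : Type*) [CommRing K] : Type _ := MonoidAlgebra K (FreeSemigroup X)

/-- The two-sided ideal (as a `K`-submodule closed under left and right multiplication)
generated by a set in a non-unital `K`-algebra. -/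
def idealSpan (K : Type*) {A : Type*} [CommRing K] [NonUnitalRing A] [Module K A]
    (s : Set A) : Submodule K A :=
  sInf {J : Submodule K A | s ⊆ J ∧ ∀ a b : A, b ∈ J → a * b ∈ J ∧ b * a ∈ J}

/-- A non-unital `K`-algebra is finitely generated if some finite subset generates it as a
`K`-algebra. -/
def NUAlgFG (K A : Type*) [CommRing K] [NonUnitalRing A] [Module K A]
    [IsScalarTower K A A] [SMulCommClass K A A] : Prop :=
  ∃ s : Finset A, NonUnitalAlgebra.adjoin K (s : Set A) = ⊤

/-- A non-unital `K`-algebra is finitely presented if it is isomorphic to the quotient of a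
free algebra `K⟨X⟩` on a finite set `X` by a finitely generated two-sided ideal, i.e. there
is a surjection from some `K⟨X⟩`, `X` finite, whose kernel is a finitely generated
two-sided ideal. -/
def NUAlgFP (K A : Type*) [CommRing K] [NonUnitalRing A] [Module K A]
    [IsScalarTower K A A] [SMulCommClass K A A] : Prop :=
  ∃ (n : ℕ) (f : FreeNUAlg K (Fin n) →ₙₐ[K] A),
    Function.Surjective f ∧
      ∃ s : Finset (FreeNUAlg K (Fin n)),
        ∀ x, f x = 0 ↔ x ∈ idealSpan K (s : Set (FreeNUAlg K (Fin n)))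

open FreeSemigroup MonoidAlgebra

namespace FSAux
variable {α : Type*}
def toL (w : FreeSemigroup α) : List α := w.head :: w.tail
lemma toL_mul (u v : FreeSemigroup α) : toL (u * v) = toL u ++ toL v := rfl
lemma toL_injective : Function.Injective (toL (α := α)) := by
  rintro ⟨a, l⟩ ⟨b, m⟩ h
  simp [toL] at h
  simp [h.1, h.2]
lemma toL_length (w : FreeSemigroup α) : (toL w).length = w.length := by
  simp [toL, FreeSemigroup.length]
lemma one_le_length (w : FreeSemigroup α) : 1 ≤ w.length := by
  simp [FreeSemigroup.length]
lemma mul_left_cancel' {w u v : FreeSemigroup α} (h : w * u = w * v) : u = v := by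
  apply toL_injective
  have := congrArg toL h
  rw [toL_mul, toL_mul] at this
  exact List.append_cancel_left this
lemma mul_of_eq_mul_of {u v : FreeSemigroup α} {a b : α}
    (h : u * FreeSemigroup.of a = v * FreeSemigroup.of b) : u = v ∧ a = b := by
  have := congrArg toL h
  rw [toL_mul, toL_mul] at this
  have h2 := List.append_inj' this rfl
  exact ⟨toL_injective h2.1, by simpa [toL, FreeSemigroup.of] using h2.2⟩
lemma mul_ne_of (u v : FreeSemigroup α) (a : α) : u * v ≠ FreeSemigroup.of a := by
  intro h
  have := congrArg FreeSemigroup.length h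
  rw [FreeSemigroup.length_mul] at this
  have : u.length + v.length = 1 := by
    simpa [FreeSemigroup.length, FreeSemigroup.of] using this
  have h1 : 1 ≤ u.length := Nat.succ_le_of_lt (by simp [FreeSemigroup.length])
  have h2 : 1 ≤ v.length := Nat.succ_le_of_lt (by simp [FreeSemigroup.length])
  omega
lemma of_inj {a b : α} (h : FreeSemigroup.of a = FreeSemigroup.of b) : a = b :=
  congrArg FreeSemigroup.head h
lemma decompose (w : FreeSemigroup α) :
    (∃ a, w = FreeSemigroup.of a) ∨ ∃ w' a, w = w' * FreeSemigroup.of a := by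
  rcases w with ⟨h, t⟩
  induction t using List.reverseRecOn with
  | nil => exact Or.inl ⟨h, rfl⟩
  | append_singleton l a _ =>
    refine Or.inr ⟨⟨h, l⟩, a, ?_⟩
    show (⟨h, l ++ [a]⟩ : FreeSemigroup α) = ⟨h, l ++ a :: []⟩
    rfl
end FSAux

open FSAux

section Lems
variable {K Y : Type*} [CommRing K]

lemma mulT_apply_eq_zero (y : Y) (q : MonoidAlgebra K (FreeSemigroup Y)) {w : FreeSemigroup Y}
    (hw : ∀ u : FreeSemigroup Y, u * FreeSemigroup.of y ≠ w) :
    (q * single (of y) (1 : K)).coeff w = 0 := by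
  classical
  rw [MonoidAlgebra.mul_apply, Finsupp.sum]
  apply Finset.sum_eq_zero
  intro u _
  rw [MonoidAlgebra.coeff_single, Finsupp.sum_single_index (by simp)]
  exact if_neg (hw u)

lemma mulT_apply_mul (y : Y) (q : MonoidAlgebra K (FreeSemigroup Y)) (w : FreeSemigroup Y) :
    (q * single (of y) (1 : K)).coeff (w * FreeSemigroup.of y) = q.coeff w := by
  rw [MonoidAlgebra.coeff_mul_single_eq_coeff_mul (x := q) w
    (fun u _ => ⟨fun h => (mul_of_eq_mul_of h).1, fun h => by rw [h]⟩), mul_one]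

lemma structure_lemma (y : Y) (p q : MonoidAlgebra K (FreeSemigroup Y))
    (hEq : single (of y) (1 : K) * p = q * single (of y) (1 : K)) :
    ∃ (c : K) (r : MonoidAlgebra K (FreeSemigroup Y)),
      p = c • single (of y) (1 : K) + r * single (of y) (1 : K) := by
  classical
  have hp : ∀ z, p.coeff z = (q * single (of y) (1 : K)).coeff (FreeSemigroup.of y * z) := by
    intro z
    have h1 : (single (of y) (1:K) * p).coeff (FreeSemigroup.of y * z) = 1 * p.coeff z :=
      MonoidAlgebra.coeff_single_mul_eq_mul_coeff (x := p) z
        (fun a _ => ⟨fun h => mul_left_cancel' h, fun h => by rw [h]⟩)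
    rw [one_mul] at h1
    rw [← h1, hEq]
  have hinj : Function.Injective (fun u : FreeSemigroup Y => u * FreeSemigroup.of y) :=
    fun u v h => (mul_of_eq_mul_of h).1
  set r : MonoidAlgebra K (FreeSemigroup Y) :=
    MonoidAlgebra.ofCoeff (Finsupp.comapDomain _ p.coeff (Set.injOn_of_injective hinj)) with hr
  have hrap : ∀ w, r.coeff w = p.coeff (w * FreeSemigroup.of y) := fun w => rfl
  refine ⟨p.coeff (FreeSemigroup.of y), r, ?_⟩
  ext w
  rw [MonoidAlgebra.coeff_add, Finsupp.add_apply, MonoidAlgebra.coeff_smul, Finsupp.smul_apply]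
  rcases decompose w with ⟨a, rfl⟩ | ⟨w', a, rfl⟩
  · rw [mulT_apply_eq_zero y r (fun u => mul_ne_of u _ a), add_zero]
    by_cases ha : a = y
    · subst ha
      rw [MonoidAlgebra.coeff_single, Finsupp.single_apply, if_pos rfl, smul_eq_mul, mul_one]
    · rw [MonoidAlgebra.coeff_single, Finsupp.single_apply, if_neg (fun h => ha (of_inj h).symm), smul_eq_mul, mul_zero]
      rw [hp (FreeSemigroup.of a)]
      exact mulT_apply_eq_zero y _ (fun u h => ha ((mul_of_eq_mul_of h).2).symm)
  · by_cases ha : a = y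
    · subst ha
      rw [mulT_apply_mul, hrap,
        MonoidAlgebra.coeff_single, Finsupp.single_apply, if_neg (Ne.symm (mul_ne_of w' _ a)), smul_eq_mul, mul_zero, zero_add]
    · rw [mulT_apply_eq_zero y r (fun u h => ha ((mul_of_eq_mul_of h).2).symm), add_zero,
        MonoidAlgebra.coeff_single, Finsupp.single_apply, if_neg (Ne.symm (mul_ne_of w' _ y)), smul_eq_mul, mul_zero]
      rw [hp (w' * FreeSemigroup.of a), ← mul_assoc]
      exact mulT_apply_eq_zero y _ (fun u h => ha ((mul_of_eq_mul_of h).2).symm)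
end Lems
section XLems
variable {K X : Type*} [CommRing K]

lemma mul_apply_zero_of_min (g b : MonoidAlgebra K (FreeSemigroup X)) {w : FreeSemigroup X}
    (hw : ∀ v ∈ b.coeff.support, w.length ≤ v.length) : (g * b).coeff w = 0 := by
  classical
  rw [MonoidAlgebra.mul_apply, Finsupp.sum]
  apply Finset.sum_eq_zero
  intro u _
  rw [Finsupp.sum]
  apply Finset.sum_eq_zero
  intro v hv
  apply if_neg
  intro huv
  have h1 := hw v hv
  have h2 := congrArg FreeSemigroup.length huv
  rw [FreeSemigroup.length_mul] at h2
  have h3 := one_le_length u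
  omega

lemma mul_apply_min_min (g b : MonoidAlgebra K (FreeSemigroup X)) {w₁ w₀ : FreeSemigroup X}
    (hw₁ : w₁ ∈ g.coeff.support) (hmin₁ : ∀ u ∈ g.coeff.support, w₁.length ≤ u.length)
    (hw₀ : w₀ ∈ b.coeff.support) (hmin₀ : ∀ v ∈ b.coeff.support, w₀.length ≤ v.length) :
    (g * b).coeff (w₁ * w₀) = g.coeff w₁ * b.coeff w₀ := by
  classical
  rw [MonoidAlgebra.mul_apply, Finsupp.sum]
  rw [Finset.sum_eq_single w₁]
  · rw [Finsupp.sum, Finset.sum_eq_single w₀]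
    · rw [if_pos rfl]
    · intro v _ hne
      exact if_neg (fun h => hne (mul_left_cancel' h))
    · intro h; exact absurd hw₀ h
  · intro u hu hne
    rw [Finsupp.sum]
    apply Finset.sum_eq_zero
    intro v hv
    apply if_neg
    intro huv
    have h1 : u.length = w₁.length := by
      have l1 := hmin₁ u hu
      have l0 := hmin₀ v hv
      have := congrArg FreeSemigroup.length huv
      rw [FreeSemigroup.length_mul, FreeSemigroup.length_mul] at this
      omega
    have hL := congrArg toL huv
    rw [toL_mul, toL_mul] at hL
    have := List.append_inj hL (by rw [toL_length, toL_length, h1])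
    exact hne (toL_injective this.1)
  · intro h; exact absurd hw₁ h

lemma eq_zero_of_mul_eq_zero [IsDomain K] (g b : MonoidAlgebra K (FreeSemigroup X))
    (hb : b ≠ 0) (h : g * b = 0) : g = 0 := by
  by_contra hg
  obtain ⟨w₁, hw₁, hmin₁⟩ :=
    Finset.exists_min_image g.coeff.support FreeSemigroup.length (Finsupp.support_nonempty_iff.mpr (fun h => hg (MonoidAlgebra.ext h)))
  obtain ⟨w₀, hw₀, hmin₀⟩ :=
    Finset.exists_min_image b.coeff.support FreeSemigroup.length (Finsupp.support_nonempty_iff.mpr (fun h => hb (MonoidAlgebra.ext h)))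
  have heq := mul_apply_min_min g b hw₁ hmin₁ hw₀ hmin₀
  rw [h] at heq
  have h0 : g.coeff w₁ * b.coeff w₀ = 0 := by rw [← heq]; simp
  rcases mul_eq_zero.mp h0 with h' | h'
  · exact Finsupp.mem_support_iff.mp hw₁ h'
  · exact Finsupp.mem_support_iff.mp hw₀ h'

lemma smul_eq_zero_coeff [IsDomain K] (b : MonoidAlgebra K (FreeSemigroup X)) (hb : b ≠ 0)
    (c : K) (g : MonoidAlgebra K (FreeSemigroup X)) (h : g * b = c • b) : c = 0 := by
  obtain ⟨w₀, hw₀, hmin₀⟩ :=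
    Finset.exists_min_image b.coeff.support FreeSemigroup.length (Finsupp.support_nonempty_iff.mpr (fun h => hb (MonoidAlgebra.ext h)))
  have h1 : (g * b).coeff w₀ = 0 := mul_apply_zero_of_min g b hmin₀
  rw [h, MonoidAlgebra.coeff_smul, Finsupp.smul_apply, smul_eq_mul] at h1
  rcases mul_eq_zero.mp h1 with h' | h'
  · exact h'
  · exact absurd h' (Finsupp.mem_support_iff.mp hw₀)
end XLems

section Main
variable {K X : Type*} [CommRing K]

lemma mem_top_of_singles (I : NonUnitalSubalgebra K (FreeNUAlg K X))
    (hIl : ∀ a b : FreeNUAlg K X, b ∈ I → a * b ∈ I)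
    (hall : ∀ x : X, MonoidAlgebra.single (of x) (1 : K) ∈ I) :
    ∀ p : FreeNUAlg K X, p ∈ I := by
  have key : ∀ (w : FreeSemigroup X) (c : K), MonoidAlgebra.single w c ∈ I := by
    intro w
    induction w using FreeSemigroup.recOnMul with
    | ih1 a =>
      intro c
      have : MonoidAlgebra.single (of a) c = c • MonoidAlgebra.single (of a) (1 : K) := by
        rw [MonoidAlgebra.smul_single, smul_eq_mul, mul_one]
      rw [this]
      exact SMulMemClass.smul_mem c (hall a)
    | ih2 a v iha ihv =>
      intro c
      have : MonoidAlgebra.single (of a * v) c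
          = MonoidAlgebra.single (of a) c * MonoidAlgebra.single v (1 : K) := by
        rw [MonoidAlgebra.single_mul_single, mul_one]
      rw [this]
      exact hIl _ _ (ihv 1)
  intro p
  induction p using MonoidAlgebra.induction with
  | zero => exact I.zero_mem
  | single_add w c p _ _ ih => exact I.add_mem (key w c) ih

end Main

/-- Let `K` be an integral domain (not necessarily Noetherian) and
`K⟨X⟩` the free `K`-algebra on a nonempty set `X`. Then no proper nonzero two-sided ideal
`I` of `K⟨X⟩` (a `K`-subalgebra closed under left and right multiplication by arbitrary
elements) is free as a `K`-algebra, i.e. there is no `K`-algebra isomorphism (bijective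
homomorphism) from a free `K`-algebra `K⟨Y⟩` on any set `Y` onto `I`. -/
theorem ideal_of_free_algebra_not_free
    (K X : Type*) [CommRing K] [IsDomain K] [Nonempty X]
    (I : NonUnitalSubalgebra K (FreeNUAlg K X))
    (hIl : ∀ a b : FreeNUAlg K X, b ∈ I → a * b ∈ I)
    (hIr : ∀ a b : FreeNUAlg K X, b ∈ I → b * a ∈ I)
    (hne_bot : I.toSubmodule ≠ ⊥) (hne_top : I.toSubmodule ≠ ⊤)
    (Y : Type*) :
    ¬ ∃ f : FreeNUAlg K Y →ₙₐ[K] I, Function.Bijective f := by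
  rintro ⟨f, hf⟩
  classical
  cases isEmpty_or_nonempty Y with
  | inl hY =>
    haveI : IsEmpty (FreeSemigroup Y) := ⟨fun w => IsEmpty.elim hY w.head⟩
    apply hne_bot
    rw [Submodule.eq_bot_iff]
    intro a ha
    obtain ⟨p, hp⟩ := hf.2 ⟨a, ha⟩
    have hp0 : p = 0 := by
      ext w
      exact isEmptyElim w
    have : (⟨a, ha⟩ : I) = 0 := by rw [← hp, hp0, map_zero]
    exact congrArg Subtype.val this
  | inr hY =>
    obtain ⟨y⟩ := hY
    -- there is a letter not in I
    have hex : ∃ x : X, MonoidAlgebra.single (of x) (1 : K) ∉ I := by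
      by_contra hall
      push_neg at hall
      apply hne_top
      rw [Submodule.eq_top_iff']
      intro p
      exact mem_top_of_singles I hIl hall p
    obtain ⟨x, hx⟩ := hex
    set T : FreeNUAlg K Y := MonoidAlgebra.single (of y) (1 : K) with hT
    set e := Equiv.ofBijective f hf with he
    set bI : I := f T with hbI
    set b : FreeNUAlg K X := (bI : FreeNUAlg K X) with hb
    have hbmem : b ∈ I := bI.2
    have hbne : b ≠ 0 := by
      intro h0
      apply one_ne_zero (α := K)
      have h2 : T = 0 := hf.1 (by rw [map_zero]; exact Subtype.ext h0)
      rw [hT] at h2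
      exact MonoidAlgebra.single_eq_zero.mp h2
    set xK : FreeNUAlg K X := MonoidAlgebra.single (of x) (1 : K) with hxK
    set p : FreeNUAlg K Y := e.symm ⟨xK * b, hIl _ _ hbmem⟩ with hp
    set q : FreeNUAlg K Y := e.symm ⟨b * xK, hIr _ _ hbmem⟩ with hq
    have hfp : f p = ⟨xK * b, hIl _ _ hbmem⟩ := e.apply_symm_apply _
    have hfq : f q = ⟨b * xK, hIr _ _ hbmem⟩ := e.apply_symm_apply _
    have hEq : T * p = q * T := by
      apply hf.1
      rw [map_mul, map_mul, hfp, hfq, ← hbI]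
      apply Subtype.ext
      show b * (xK * b) = (b * xK) * b
      rw [mul_assoc]
    obtain ⟨c, r, hpc⟩ := structure_lemma y p q hEq
    set hv : FreeNUAlg K X := ((f r : I) : FreeNUAlg K X) with hhv
    have hval : xK * b = c • b + hv * b := by
      have h1 : f p = c • f T + f r * f T := by rw [hpc, map_add, map_smul, map_mul]
      have h2 := congrArg (Subtype.val) h1
      rw [hfp] at h2
      simpa using h2
    have hg : (xK - hv) * b = c • b := by
      rw [sub_mul, hval]
      abel
    have hc : c = 0 := smul_eq_zero_coeff b hbne c _ hg
    rw [hc, zero_smul] at hg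
    have h0 : xK - hv = 0 := eq_zero_of_mul_eq_zero _ b hbne hg
    have : xK = hv := sub_eq_zero.mp h0
    apply hx
    rw [this, hhv]
    exact (f r).2
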